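/- Let G be a Hamiltonian graph on an odd number n of vertices such that the cycle space C(G) is not generated by the Hamilton cycles (i.e., C_n(G) ≠ C(G)). Then there exists a subgraph R ⊆ G such that: (a) R ≠ G; (b) every Hamilton cycle of G contains an even number of edges from R; and (c) for every partition V(G) = A ∪ B, the number of R-edges between A and B is at least half the number of G-edges between A and B, and R is not equal to the bipartite subgraph G[A,B]. -/

import Mathlib

open SimpleGraph

variable {V : Type} [Fintype V] [DecidableEq V]

/-- Indicator vector over F₂ of a list of edges. -/
def edgeIndicator (l : List (Sym2 V)) : Sym2 V → ZMod 2 :=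
  fun e => if e ∈ l then 1 else 0

/-- The cycle space of a graph: the F₂-span of edge sets of cycles. -/
def cycleSpace (G : SimpleGraph V) : Submodule (ZMod 2) (Sym2 V → ZMod 2) :=
  Submodule.span (ZMod 2)
    {f | ∃ (u : V) (c : G.Walk u u), c.IsCycle ∧ f = edgeIndicator c.edges}

/-- The subspace of the cycle space generated by cycles of length exactly `k`. -/
def cycleSpaceLen (G : SimpleGraph V) (k : ℕ) : Submodule (ZMod 2) (Sym2 V → ZMod 2) :=
  Submodule.span (ZMod 2)
    {f | ∃ (u : V) (c : G.Walk u u), c.IsCycle ∧ c.length = k ∧ f = edgeIndicator c.edges}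

/-- Number of edges of `G` with one endpoint in `A` and one in `B`. -/
noncomputable def eCnt (G : SimpleGraph V) (A B : Set V) : ℕ :=
  {e : Sym2 V | e ∈ G.edgeSet ∧ ∃ a ∈ A, ∃ b ∈ B, e = s(a, b)}.ncard

/-- The bipartite subgraph `G[A,B]` of edges with one endpoint in `A`, one in `B`. -/
def bipSub (G : SimpleGraph V) (A B : Set V) : SimpleGraph V where
  Adj x y := G.Adj x y ∧ ((x ∈ A ∧ y ∈ B) ∨ (x ∈ B ∧ y ∈ A))
  symm := by
    constructor
    intro x y h
    exact ⟨h.1.symm, by tauto⟩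
  loopless := by
    constructor
    intro x h
    exact (G.ne_of_adj h.1) rfl

/-! ### Auxiliary lemmas -/

lemma bipSub_adj (G : SimpleGraph V) (A B : Set V) (x y : V) :
    (bipSub G A B).Adj x y ↔ G.Adj x y ∧ ((x ∈ A ∧ y ∈ B) ∨ (x ∈ B ∧ y ∈ A)) :=
  Iff.rfl

lemma zmod2_even_iff (m : ℕ) : Even m ↔ (m : ZMod 2) = 0 := by
  rw [even_iff_two_dvd, ← ZMod.natCast_eq_zero_iff]

lemma zmod2_ne_zero {x : ZMod 2} (h : x ≠ 0) : x = 1 := by revert h; revert x; decide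

lemma sum_zmod2 {α : Type} [DecidableEq α] (T : Finset α) (f : α → ZMod 2) :
    ∑ e ∈ T, f e = ((T.filter (fun e => f e = 1)).card : ZMod 2) := by
  rw [Finset.card_filter]
  push_cast
  refine Finset.sum_congr rfl fun e _ => ?_
  generalize f e = x; revert x; decide

lemma edgeIndicator_eq_sum (l : List (Sym2 V)) :
    edgeIndicator l = ∑ e ∈ l.toFinset, Pi.single e (1 : ZMod 2) := by
  funext x
  simp [edgeIndicator, Pi.single_apply, Finset.sum_ite_eq]

lemma phi_edgeIndicator (φ : Module.Dual (ZMod 2) (Sym2 V → ZMod 2)) (l : List (Sym2 V)) :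
    φ (edgeIndicator l) =
      ((l.toFinset.filter (fun e => φ (Pi.single e 1) = 1)).card : ZMod 2) := by
  rw [edgeIndicator_eq_sum, map_sum, sum_zmod2]

/-- `1` or `0` according to membership in `A`. -/
noncomputable def chi (A : Set V) (v : V) : ZMod 2 := A.indicator (fun _ => 1) v

/-- The "crossing" indicator of an edge w.r.t. the cut at `A`. -/
noncomputable def cutFun (A : Set V) : Sym2 V → ZMod 2 :=
  Sym2.lift ⟨fun a b => chi A a + chi A b, fun a b => add_comm _ _⟩

lemma zmod2_add_self (x : ZMod 2) : x + x = 0 := by revert x; decide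

lemma walk_cut_parity {G : SimpleGraph V} (A : Set V) {u v : V} (p : G.Walk u v) :
    (p.edges.map (cutFun A)).sum = chi A u + chi A v := by
  induction p with
  | nil => simp [zmod2_add_self]
  | @cons a b c h p ih =>
    have : cutFun A s(a, b) = chi A a + chi A b := by simp [cutFun]
    rw [Walk.edges_cons, List.map_cons, List.sum_cons, ih, this]
    have := zmod2_add_self (chi A b)
    linear_combination this

lemma cycle_cut_zero {G : SimpleGraph V} (A : Set V) {u : V} (c : G.Walk u u)
    (hnd : c.edges.Nodup) :
    ((c.edges.toFinset.filter (fun e => cutFun A e = 1)).card : ZMod 2) = 0 := by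
  rw [← sum_zmod2, List.sum_toFinset _ hnd, walk_cut_parity, zmod2_add_self]

lemma cutFun_iff {G : SimpleGraph V} {A B : Set V} (hU : A ∪ B = Set.univ)
    (hD : Disjoint A B) {e : Sym2 V} (he : e ∈ G.edgeSet) :
    cutFun A e = 1 ↔ ∃ a ∈ A, ∃ b ∈ B, e = s(a, b) := by
  have hB : ∀ v : V, v ∈ B ↔ v ∉ A := by
    intro v
    constructor
    · exact fun hv hv' => hD.ne_of_mem hv' hv rfl
    · intro hv
      have : v ∈ A ∪ B := hU ▸ Set.mem_univ v
      exact ((Set.mem_union v A B).1 this).resolve_left hv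
  induction e with
  | _ x y =>
    have h1 : (∃ a ∈ A, ∃ b ∈ B, s(x, y) = s(a, b)) ↔
        ((x ∈ A ∧ y ∈ B) ∨ (y ∈ A ∧ x ∈ B)) := by
      constructor
      · rintro ⟨a, ha, b, hb, hs⟩
        rw [Sym2.eq_iff] at hs
        rcases hs with ⟨rfl, rfl⟩ | ⟨rfl, rfl⟩ <;> tauto
      · rintro (⟨hx, hy⟩ | ⟨hy, hx⟩)
        · exact ⟨x, hx, y, hy, rfl⟩
        · exact ⟨y, hy, x, hx, (Sym2.eq_swap)⟩
    rw [h1]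
    have h2 : cutFun A s(x, y) = chi A x + chi A y := by simp [cutFun]
    rw [h2, hB x, hB y]
    by_cases hx : x ∈ A <;> by_cases hy : y ∈ A <;>
      simp [chi, Set.indicator_of_mem, Set.indicator_of_notMem, hx, hy] <;> tauto

lemma card_symmDiff_key {α : Type} [DecidableEq α] (P Q : Finset α) :
    (symmDiff P Q).card + 2 * (P ∩ Q).card = P.card + Q.card := by
  rw [symmDiff_def]
  have hd : Disjoint (P \ Q) (Q \ P) := disjoint_sdiff_sdiff
  rw [Finset.sup_eq_union, Finset.card_union_of_disjoint hd]
  have h1 := Finset.card_sdiff_add_card_inter P Q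
  have h2 := Finset.card_sdiff_add_card_inter Q P
  rw [Finset.inter_comm] at h2
  omega

lemma inter_symmDiff_eq {α : Type} [DecidableEq α] (X P Q : Finset α) :
    X ∩ symmDiff P Q = symmDiff (X ∩ P) (X ∩ Q) := by
  have := inf_symmDiff_distrib_left X P Q
  simpa using this

lemma inter_symmDiff_card_zmod2 {α : Type} [DecidableEq α] (X P Q : Finset α) :
    ((X ∩ symmDiff P Q).card : ZMod 2) =
      ((X ∩ P).card : ZMod 2) + ((X ∩ Q).card : ZMod 2) := by
  rw [inter_symmDiff_eq]
  have h := card_symmDiff_key (X ∩ P) (X ∩ Q)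
  have := congrArg (fun n : ℕ => (n : ZMod 2)) h
  push_cast at this
  have h2 : (2 : ZMod 2) = 0 := by decide
  rw [h2] at this
  simpa using this

/-- Existence of a set of edges meeting every `n`-cycle evenly and some cycle oddly. -/
lemma exists_goodS (G : SimpleGraph V)
    (hneq : cycleSpaceLen G (Fintype.card V) ≠ cycleSpace G) :
    ∃ S : Finset (Sym2 V), ↑S ⊆ G.edgeSet ∧
      (∀ (u : V) (c : G.Walk u u), c.IsCycle → c.length = Fintype.card V →
        ((c.edges.toFinset ∩ S).card : ZMod 2) = 0) ∧
      (∃ (u : V) (c : G.Walk u u), c.IsCycle ∧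
        ((c.edges.toFinset ∩ S).card : ZMod 2) = 1) := by
  classical
  have hle : cycleSpaceLen G (Fintype.card V) ≤ cycleSpace G := by
    apply Submodule.span_mono
    rintro f ⟨u, c, hc, _, hf⟩
    exact ⟨u, c, hc, hf⟩
  obtain ⟨x, hxC, hxL⟩ :
      ∃ x, x ∈ cycleSpace G ∧ x ∉ cycleSpaceLen G (Fintype.card V) := by
    by_contra h
    push_neg at h
    exact hneq (le_antisymm hle h)
  obtain ⟨φ, hφx, hφmap⟩ :=
    Submodule.exists_dual_map_eq_bot_of_notMem hxL inferInstance
  have hvanish : ∀ y ∈ cycleSpaceLen G (Fintype.card V), φ y = 0 := by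
    intro y hy
    have : φ y ∈ Submodule.map φ (cycleSpaceLen G (Fintype.card V)) :=
      Submodule.mem_map_of_mem hy
    rw [hφmap] at this
    exact (Submodule.mem_bot (ZMod 2)).1 this
  obtain ⟨u₀, c₀, hc₀, hφc₀⟩ :
      ∃ (u : V) (c : G.Walk u u), c.IsCycle ∧ φ (edgeIndicator c.edges) ≠ 0 := by
    by_contra h
    push_neg at h
    have hker : cycleSpace G ≤ LinearMap.ker φ := by
      rw [cycleSpace, Submodule.span_le]
      rintro f ⟨u, c, hc, rfl⟩
      exact LinearMap.mem_ker.2 (h u c hc)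
    exact hφx (LinearMap.mem_ker.1 (hker hxC))
  set S : Finset (Sym2 V) :=
    G.edgeFinset.filter (fun e => φ (Pi.single e 1) = 1) with hS
  have hinter : ∀ {a b : V} (w : G.Walk a b),
      w.edges.toFinset ∩ S = w.edges.toFinset.filter (fun e => φ (Pi.single e 1) = 1) := by
    intro a b w
    have hmemS : ∀ e, e ∈ S ↔ e ∈ G.edgeFinset ∧ φ (Pi.single e 1) = 1 := fun e => by
      rw [hS]; exact Finset.mem_filter
    ext e
    constructor
    · intro he
      have h1 := Finset.mem_inter.1 he
      exact Finset.mem_filter.2 ⟨h1.1, ((hmemS e).1 h1.2).2⟩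
    · intro he
      obtain ⟨h1, h2⟩ := Finset.mem_filter.1 he
      refine Finset.mem_inter.2 ⟨h1, (hmemS e).2 ⟨?_, h2⟩⟩
      exact mem_edgeFinset.2 (w.edges_subset_edgeSet (List.mem_toFinset.1 h1))
  have hsub : ↑S ⊆ G.edgeSet := by
    intro e he
    rw [hS] at he
    exact mem_edgeFinset.1 (Finset.filter_subset _ _ (Finset.mem_coe.1 he))
  refine ⟨S, hsub, ?_, ?_⟩
  · intro u c hc hlen
    rw [hinter c, ← phi_edgeIndicator]
    exact hvanish _ (Submodule.subset_span ⟨u, c, hc, hlen, rfl⟩)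
  · refine ⟨u₀, c₀, hc₀, ?_⟩
    rw [hinter c₀, ← phi_edgeIndicator]
    exact zmod2_ne_zero hφc₀

set_option maxHeartbeats 1000000 in
theorem stmt0 (G : SimpleGraph V)
    (hodd : Odd (Fintype.card V))
    (hham : ∃ (u : V) (c : G.Walk u u), c.IsHamiltonianCycle)
    (hneq : cycleSpaceLen G (Fintype.card V) ≠ cycleSpace G) :
    ∃ R : SimpleGraph V, R ≤ G ∧ R ≠ G ∧
      (∀ (u : V) (c : G.Walk u u), c.IsHamiltonianCycle →
        Even ({e : Sym2 V | e ∈ c.edges ∧ e ∈ R.edgeSet}.ncard)) ∧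
      (∀ A B : Set V, A ∪ B = Set.univ → Disjoint A B →
        eCnt G A B ≤ 2 * eCnt R A B ∧ R ≠ bipSub G A B) := by
  classical
  -- the family of "good" edge sets
  set Good : Finset (Sym2 V) → Prop := fun S =>
    (∀ (u : V) (c : G.Walk u u), c.IsCycle → c.length = Fintype.card V →
        ((c.edges.toFinset ∩ S).card : ZMod 2) = 0) ∧
      (∃ (u : V) (c : G.Walk u u), c.IsCycle ∧
        ((c.edges.toFinset ∩ S).card : ZMod 2) = 1) with hGood
  set F : Finset (Finset (Sym2 V)) := G.edgeFinset.powerset.filter Good with hF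
  obtain ⟨S₀, hS₀sub, hS₀e, hS₀o⟩ := exists_goodS G hneq
  have hS₀F : S₀ ∈ F := by
    rw [hF, Finset.mem_filter, Finset.mem_powerset]
    exact ⟨fun e he => mem_edgeFinset.2 (hS₀sub (Finset.mem_coe.2 he)), hS₀e, hS₀o⟩
  have hFne : F.Nonempty := ⟨S₀, hS₀F⟩
  obtain ⟨S, hSF, hSmax⟩ := F.exists_max_image Finset.card hFne
  have hSsub : S ⊆ G.edgeFinset := Finset.mem_powerset.1 (Finset.mem_filter.1 hSF).1
  have hSgood : Good S := (Finset.mem_filter.1 hSF).2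
  obtain ⟨hSeven, u₀, c₀, hc₀, hSodd⟩ := hSgood
  -- the graph R
  set R : SimpleGraph V := fromEdgeSet ↑S with hR
  have hRedge : R.edgeSet = ↑S := by
    rw [hR, edgeSet_fromEdgeSet]
    ext e
    simp only [Set.mem_diff, Set.mem_setOf_eq, Finset.mem_coe, and_iff_left_iff_imp]
    intro he
    exact G.not_isDiag_of_mem_edgeSet (mem_edgeFinset.1 (hSsub he))
  have hRle : R ≤ G := by
    rw [← edgeSet_subset_edgeSet, hRedge]
    intro e he
    exact mem_edgeFinset.1 (hSsub he)
  have hRne : R ≠ G := by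
    intro h
    obtain ⟨u, c, hc⟩ := hham
    have hSeq : S = G.edgeFinset := by
      apply Finset.coe_injective
      rw [← hRedge, h, coe_edgeFinset]
    have hsub : c.edges.toFinset ⊆ S := by
      rw [hSeq]
      intro e he
      exact mem_edgeFinset.2 (c.edges_subset_edgeSet (List.mem_toFinset.1 he))
    have hi : c.edges.toFinset ∩ S = c.edges.toFinset := Finset.inter_eq_left.2 hsub
    have hcard : (c.edges.toFinset ∩ S).card = Fintype.card V := by
      rw [hi, List.toFinset_card_of_nodup hc.isCycle.edges_nodup, Walk.length_edges,
        hc.length_eq]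
    have := hSeven u c hc.isCycle hc.length_eq
    rw [hcard] at this
    rw [← zmod2_even_iff] at this
    exact (Nat.not_even_iff_odd.2 hodd) this
  refine ⟨R, hRle, hRne, ?_, ?_⟩
  · -- every Hamilton cycle meets R evenly
    intro u c hc
    have hset : {e : Sym2 V | e ∈ c.edges ∧ e ∈ R.edgeSet} = ↑(c.edges.toFinset ∩ S) := by
      ext e
      simp [hRedge]
    rw [hset, Set.ncard_coe_finset, zmod2_even_iff]
    exact hSeven u c hc.isCycle hc.length_eq
  · -- the cut conditions
    intro A B hU hD
    set cutP : Sym2 V → Prop := fun e => ∃ a ∈ A, ∃ b ∈ B, e = s(a, b) with hcutP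
    set C : Finset (Sym2 V) := G.edgeFinset.filter cutP with hC
    have hCsub : C ⊆ G.edgeFinset := Finset.filter_subset _ _
    have hCcoe : {e : Sym2 V | e ∈ G.edgeSet ∧ cutP e} = ↑C := by
      ext e
      simp [hC, mem_edgeFinset]
    have hCfun : ∀ e ∈ G.edgeSet, (e ∈ C ↔ cutFun A e = 1) := by
      intro e he
      rw [hC, Finset.mem_filter, mem_edgeFinset]
      constructor
      · rintro ⟨_, hp⟩
        exact (cutFun_iff hU hD he).2 hp
      · intro hp
        exact ⟨he, (cutFun_iff hU hD he).1 hp⟩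
    -- every cycle crosses the cut evenly
    have hcyccut : ∀ {a : V} (c : G.Walk a a), c.IsCycle →
        ((c.edges.toFinset ∩ C).card : ZMod 2) = 0 := by
      intro a c hcyc
      have heq : c.edges.toFinset ∩ C =
          c.edges.toFinset.filter (fun e => cutFun A e = 1) := by
        ext e
        simp only [Finset.mem_inter, Finset.mem_filter, List.mem_toFinset]
        constructor
        · rintro ⟨he, heC⟩
          exact ⟨he, (hCfun e (c.edges_subset_edgeSet he)).1 heC⟩
        · rintro ⟨he, hp⟩
          exact ⟨he, (hCfun e (c.edges_subset_edgeSet he)).2 hp⟩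
      rw [heq]
      exact cycle_cut_zero A c hcyc.edges_nodup
    -- eCnt computations
    have heCntG : eCnt G A B = C.card := by
      rw [eCnt, hCcoe, Set.ncard_coe_finset]
    have hmemC : ∀ e, e ∈ C ↔ e ∈ G.edgeSet ∧ cutP e := fun e => by
      rw [hC, Finset.mem_filter, mem_edgeFinset]
    have heCntR : eCnt R A B = (S ∩ C).card := by
      have hsets : {e : Sym2 V | e ∈ R.edgeSet ∧ cutP e} = ↑(S ∩ C) := by
        ext e
        rw [Set.mem_setOf_eq, hRedge]
        simp only [Finset.mem_coe, Finset.mem_inter]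
        constructor
        · rintro ⟨he, hp⟩
          exact ⟨he, (hmemC e).2 ⟨mem_edgeFinset.1 (hSsub he), hp⟩⟩
        · rintro ⟨he, heC⟩
          exact ⟨he, ((hmemC e).1 heC).2⟩
      rw [eCnt, hsets, Set.ncard_coe_finset]
    -- the symmetric difference is good too, so by maximality we get the bound
    have hS'good : symmDiff S C ∈ F := by
      rw [hF, Finset.mem_filter, Finset.mem_powerset]
      refine ⟨?_, ?_, ?_⟩
      · intro e he
        rw [Finset.mem_symmDiff] at he
        rcases he with ⟨he, _⟩ | ⟨he, _⟩
        · exact hSsub he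
        · exact hCsub he
      · intro u c hc hlen
        rw [inter_symmDiff_card_zmod2, hSeven u c hc hlen, hcyccut c hc, add_zero]
      · refine ⟨u₀, c₀, hc₀, ?_⟩
        rw [inter_symmDiff_card_zmod2, hSodd, hcyccut c₀ hc₀, add_zero]
    have hcardle : (symmDiff S C).card ≤ S.card := hSmax _ hS'good
    have hkey := card_symmDiff_key S C
    have hinter2 := Finset.card_sdiff_add_card_inter C S
    constructor
    · rw [heCntG, heCntR]
      rw [Finset.inter_comm C S] at hinter2
      have h3 := Finset.card_sdiff_add_card_inter S C
      omega
    · -- R ≠ bipSub G A B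
      intro h
      have hbip : (bipSub G A B).edgeSet = ↑C := by
        ext e
        induction e with
        | _ x y =>
          rw [mem_edgeSet, bipSub_adj]
          rw [Finset.mem_coe, hC, Finset.mem_filter, mem_edgeFinset, mem_edgeSet, hcutP]
          constructor
          · rintro ⟨hadj, ⟨hx, hy⟩ | ⟨hx, hy⟩⟩
            · exact ⟨hadj, x, hx, y, hy, rfl⟩
            · exact ⟨hadj, y, hy, x, hx, Sym2.eq_swap⟩
          · rintro ⟨hadj, a, ha, b, hb, hs⟩
            rw [Sym2.eq_iff] at hs
            refine ⟨hadj, ?_⟩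
            rcases hs with ⟨rfl, rfl⟩ | ⟨rfl, rfl⟩ <;> tauto
      have hSC : S = C := by
        apply Finset.coe_injective
        rw [← hRedge, h, hbip]
      rw [hSC] at hSodd
      rw [hcyccut c₀ hc₀] at hSodd
      exact one_ne_zero hSodd.symm
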